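/- Let d ≥ 2 be an integer, let a ≤ b and a' ≤ b' in ℝ, let f : ℝ → (Fin d → ℝ) be well-parametrized on [a,b] via v, and let g : ℝ → (Fin d → ℝ) be well-parametrized on [a',b'] via w. If the images coincide, i.e. f '' (Set.Icc a b) = g '' (Set.Icc a' b'), then b − a = b' − a'. -/

import Mathlib

/-- A vector `v : Fin (d+2) → ℝ` is Minkowski-unit if
`(v 0)^2 − ((v 1)^2 + ⋯ + (v (d+1))^2) = 1`. -/
def MinkUnit {d : ℕ} (v : Fin (d + 2) → ℝ) : Prop :=
  (v 0) ^ 2 - ∑ i ∈ Finset.univ.erase (0 : Fin (d + 2)), (v i) ^ 2 = 1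

/-- `f` is well-parametrized on `[a,b]` via `v`: at every `x ∈ [a,b]`, `f` has
derivative `v x` at `x` within `[a,b]`, and `v x` is Minkowski-unit. -/
def WellParam {d : ℕ} (a b : ℝ) (f v : ℝ → Fin (d + 2) → ℝ) : Prop :=
  ∀ x ∈ Set.Icc a b, HasDerivWithinAt f (v x) (Set.Icc a b) x ∧ MinkUnit (v x)

open Set Filter Topology

lemma MinkUnit.one_le_sq {d : ℕ} {v : Fin (d + 2) → ℝ} (h : MinkUnit v) :
    1 ≤ (v 0) ^ 2 := by
  have hs : 0 ≤ ∑ i ∈ Finset.univ.erase (0 : Fin (d + 2)), (v i) ^ 2 :=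
    Finset.sum_nonneg fun i _ => sq_nonneg _
  unfold MinkUnit at h
  nlinarith [h, hs]

lemma WellParam.time_hasDerivWithinAt {d : ℕ} {a b : ℝ} {f v : ℝ → Fin (d + 2) → ℝ}
    (hf : WellParam a b f v) {x : ℝ} (hx : x ∈ Set.Icc a b) :
    HasDerivWithinAt (fun z => f z 0) (v x 0) (Set.Icc a b) x :=
  (hasDerivWithinAt_pi.1 (hf x hx).1) 0

lemma WellParam.time_continuousOn {d : ℕ} {a b : ℝ} {f v : ℝ → Fin (d + 2) → ℝ}
    (hf : WellParam a b f v) : ContinuousOn (fun z => f z 0) (Set.Icc a b) :=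
  fun x hx => (hf.time_hasDerivWithinAt hx).continuousWithinAt

lemma WellParam.time_injOn {d : ℕ} {a b : ℝ} {f v : ℝ → Fin (d + 2) → ℝ}
    (hf : WellParam a b f v) : Set.InjOn (fun z => f z 0) (Set.Icc a b) := by
  have key : ∀ x ∈ Set.Icc a b, ∀ y ∈ Set.Icc a b, x < y → f x 0 ≠ f y 0 := by
    intro x hx y hy hlt hxy
    have hsub : Set.Icc x y ⊆ Set.Icc a b := Set.Icc_subset_Icc hx.1 hy.2
    obtain ⟨c, hc, hc0⟩ := exists_hasDerivAt_eq_zero (f := fun z => f z 0)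
        (f' := fun z => v z 0) hlt (hf.time_continuousOn.mono hsub) hxy
        (fun z hz => by
          have hzi : z ∈ Set.Ioo a b := ⟨hx.1.trans_lt hz.1, hz.2.trans_le hy.2⟩
          exact (hf.time_hasDerivWithinAt (Set.Ioo_subset_Icc_self hzi)).hasDerivAt
            (Icc_mem_nhds hzi.1 hzi.2))
    have := (hf c (hsub (Set.Ioo_subset_Icc_self hc))).2.one_le_sq
    rw [hc0] at this
    norm_num at this
  intro x hx y hy hxy
  rcases lt_trichotomy x y with h | h | h
  · exact absurd hxy (key x hx y hy h)
  · exact h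
  · exact absurd hxy.symm (key y hy x hx h)

lemma WellParam.rev {d : ℕ} {a b : ℝ} {f v : ℝ → Fin (d + 2) → ℝ}
    (hf : WellParam a b f v) :
    WellParam a b (fun x => f (a + b - x)) (fun x => -v (a + b - x)) := by
  intro x hx
  have hmem : a + b - x ∈ Set.Icc a b := ⟨by linarith [hx.2], by linarith [hx.1]⟩
  constructor
  · have hh : HasDerivWithinAt (fun z : ℝ => a + b - z) (-1) (Set.Icc a b) x :=
      ((hasDerivAt_id x).const_sub (a + b)).hasDerivWithinAt
    have := (hf _ hmem).1.scomp x hh (fun z hz => ⟨by linarith [hz.2], by linarith [hz.1]⟩)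
    simpa [Function.comp_def] using this
  · have h := (hf _ hmem).2
    unfold MinkUnit at h ⊢
    simpa using h

lemma rev_image {a b : ℝ} {E : Type*} (f : ℝ → E) :
    (fun x => f (a + b - x)) '' Set.Icc a b = f '' Set.Icc a b := by
  have hm : (fun x : ℝ => a + b - x) '' Set.Icc a b = Set.Icc a b := by
    ext y
    simp only [Set.mem_image, Set.mem_Icc]
    constructor
    · rintro ⟨x, hx, rfl⟩
      exact ⟨by linarith [hx.2], by linarith [hx.1]⟩
    · intro hy
      exact ⟨a + b - y, ⟨by linarith [hy.2], by linarith [hy.1]⟩, by ring⟩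
  rw [show (fun x => f (a + b - x)) = f ∘ (fun x : ℝ => a + b - x) from rfl,
    Set.image_comp, hm]

lemma exists_good {d : ℕ} {a b : ℝ} {f v : ℝ → Fin (d + 2) → ℝ}
    (hab : a ≤ b) (hf : WellParam a b f v) :
    ∃ F V : ℝ → Fin (d + 2) → ℝ, WellParam a b F V ∧
      F '' Set.Icc a b = f '' Set.Icc a b ∧
      StrictMonoOn (fun x => F x 0) (Set.Icc a b) := by
  rcases ContinuousOn.strictMonoOn_of_injOn_Icc' hab hf.time_continuousOn hf.time_injOn with
    h | h
  · exact ⟨f, v, hf, rfl, h⟩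
  · refine ⟨_, _, hf.rev, rev_image f, ?_⟩
    intro x hx y hy hxy
    have hxm : a + b - x ∈ Set.Icc a b := ⟨by linarith [hx.2], by linarith [hx.1]⟩
    have hym : a + b - y ∈ Set.Icc a b := ⟨by linarith [hy.2], by linarith [hy.1]⟩
    exact h hym hxm (by linarith)

lemma slope_pos_of_strictMonoOn {T : ℝ → ℝ} {s : Set ℝ} (h : StrictMonoOn T s)
    {x z : ℝ} (hx : x ∈ s) (hz : z ∈ s) (hne : z ≠ x) : 0 < slope T x z := by
  rcases hne.lt_or_gt with hlt | hlt
  · rw [slope_def_field]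
    exact div_pos_of_neg_of_neg (sub_neg.2 (h hz hx hlt)) (sub_neg.2 hlt)
  · rw [slope_def_field]
    exact div_pos (sub_pos.2 (h hx hz hlt)) (sub_pos.2 hlt)

lemma key {d : ℕ} {a b a' b' : ℝ} (hab : a < b) (hab' : a' < b')
    {f v g w : ℝ → Fin (d + 2) → ℝ}
    (hf : WellParam a b f v) (hg : WellParam a' b' g w)
    (hfm : StrictMonoOn (fun x => f x 0) (Set.Icc a b))
    (hgm : StrictMonoOn (fun x => g x 0) (Set.Icc a' b'))
    (himg : f '' Set.Icc a b = g '' Set.Icc a' b') :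
    b - a = b' - a' := by
  classical
  have hex : ∀ x : ℝ, ∃ y : ℝ, x ∈ Set.Icc a b → y ∈ Set.Icc a' b' ∧ g y = f x := by
    intro x
    by_cases hx : x ∈ Set.Icc a b
    · have hmem : f x ∈ g '' Set.Icc a' b' := himg ▸ Set.mem_image_of_mem f hx
      obtain ⟨y, hy, hgy⟩ := hmem
      exact ⟨y, fun _ => ⟨hy, hgy⟩⟩
    · exact ⟨0, fun h => absurd h hx⟩
  choose φ hφ using hex
  have hφmem : ∀ x ∈ Set.Icc a b, φ x ∈ Set.Icc a' b' := fun x hx => (hφ x hx).1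
  have hφval : ∀ x ∈ Set.Icc a b, g (φ x) = f x := fun x hx => (hφ x hx).2
  have hφT : ∀ x ∈ Set.Icc a b, g (φ x) 0 = f x 0 := fun x hx => congrFun (hφval x hx) 0
  have hφuniq : ∀ x ∈ Set.Icc a b, ∀ y ∈ Set.Icc a' b', g y = f x → y = φ x := by
    intro x hx y hy hgy
    refine hgm.injOn hy (hφmem x hx) ?_
    show g y 0 = g (φ x) 0
    rw [hφT x hx]
    exact congrFun hgy 0
  have hφmono : StrictMonoOn φ (Set.Icc a b) := by
    intro x hx y hy hxy
    have h0 : g (φ x) 0 < g (φ y) 0 := by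
      rw [hφT x hx, hφT y hy]; exact hfm hx hy hxy
    exact (hgm.lt_iff_lt (hφmem x hx) (hφmem y hy)).1 h0
  have haI : a ∈ Set.Icc a b := Set.left_mem_Icc.2 hab.le
  have hbI : b ∈ Set.Icc a b := Set.right_mem_Icc.2 hab.le
  have hφa : φ a = a' := by
    obtain ⟨x, hx, hfx⟩ : g a' ∈ f '' Set.Icc a b := by
      rw [himg]; exact Set.mem_image_of_mem g (Set.left_mem_Icc.2 hab'.le)
    have hax : a' = φ x := hφuniq x hx a' (Set.left_mem_Icc.2 hab'.le) hfx.symm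
    have h1 : φ a ≤ φ x := hφmono.monotoneOn haI hx hx.1
    have h2 : a' ≤ φ a := (hφmem a haI).1
    rw [hax] at h2 ⊢
    exact le_antisymm (hax ▸ h1) h2
  have hφb : φ b = b' := by
    obtain ⟨x, hx, hfx⟩ : g b' ∈ f '' Set.Icc a b := by
      rw [himg]; exact Set.mem_image_of_mem g (Set.right_mem_Icc.2 hab'.le)
    have hbx : b' = φ x := hφuniq x hx b' (Set.right_mem_Icc.2 hab'.le) hfx.symm
    have h1 : φ x ≤ φ b := hφmono.monotoneOn hx hbI hx.2
    have h2 : φ b ≤ b' := (hφmem b hbI).2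
    exact le_antisymm h2 (hbx ▸ h1)
  have hφIoo : ∀ x ∈ Set.Ioo a b, φ x ∈ Set.Ioo a' b' := by
    intro x hx
    constructor
    · rw [← hφa]; exact hφmono haI (Set.Ioo_subset_Icc_self hx) hx.1
    · rw [← hφb]; exact hφmono (Set.Ioo_subset_Icc_self hx) hbI hx.2
  have hsurj : Set.Ioo a' b' ⊆ φ '' Set.Ioo a b := by
    intro y hy
    obtain ⟨x, hx, hfx⟩ : g y ∈ f '' Set.Icc a b := by
      rw [himg]; exact Set.mem_image_of_mem g (Set.Ioo_subset_Icc_self hy)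
    have hyx : y = φ x := hφuniq x hx y (Set.Ioo_subset_Icc_self hy) hfx.symm
    have hxa : x ≠ a := by rintro rfl; rw [hφa] at hyx; exact absurd hyx.symm hy.1.ne
    have hxb : x ≠ b := by rintro rfl; rw [hφb] at hyx; exact absurd hyx hy.2.ne
    exact ⟨x, ⟨hx.1.lt_of_ne (Ne.symm hxa), hx.2.lt_of_ne hxb⟩, hyx.symm⟩
  have hφcont : ∀ x0 ∈ Set.Ioo a b, ContinuousAt φ x0 := by
    intro x0 hx0
    refine continuousAt_of_monotoneOn_of_image_mem_nhds
      ((hφmono.mono Set.Ioo_subset_Icc_self).monotoneOn)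
      (Ioo_mem_nhds hx0.1 hx0.2) ?_
    exact mem_of_superset (Ioo_mem_nhds (hφIoo x0 hx0).1 (hφIoo x0 hx0).2) hsurj
  -- the interior derivative of φ is 1
  have hkey : ∀ x0 ∈ Set.Ioo a b, HasDerivAt φ 1 x0 := by
    intro x0 hx0
    have hx0I : x0 ∈ Set.Icc a b := Set.Ioo_subset_Icc_self hx0
    set y0 := φ x0 with hy0def
    have hy0 : y0 ∈ Set.Ioo a' b' := hφIoo x0 hx0
    have hy0I : y0 ∈ Set.Icc a' b' := Set.Ioo_subset_Icc_self hy0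
    have hTf : HasDerivAt (fun z => f z 0) (v x0 0) x0 :=
      (hf.time_hasDerivWithinAt hx0I).hasDerivAt (Icc_mem_nhds hx0.1 hx0.2)
    have hTg : HasDerivAt (fun z => g z 0) (w y0 0) y0 :=
      (hg.time_hasDerivWithinAt hy0I).hasDerivAt (Icc_mem_nhds hy0.1 hy0.2)
    have hIoo : ∀ᶠ z in 𝓝[≠] x0, z ∈ Set.Ioo a b :=
      Filter.Eventually.filter_mono nhdsWithin_le_nhds (Ioo_mem_nhds hx0.1 hx0.2)
    have hne : ∀ᶠ z in 𝓝[≠] x0, z ≠ x0 := self_mem_nhdsWithin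
    -- v x0 0 ≥ 1
    have hv1 : 1 ≤ v x0 0 := by
      have hsl : Filter.Tendsto (slope (fun z => f z 0) x0) (𝓝[≠] x0) (𝓝 (v x0 0)) :=
        hasDerivAt_iff_tendsto_slope.1 hTf
      have hev : ∀ᶠ z in 𝓝[≠] x0, (0:ℝ) ≤ slope (fun z => f z 0) x0 z := by
        filter_upwards [hIoo, hne] with z hz hzne
        exact (slope_pos_of_strictMonoOn hfm hx0I (Set.Ioo_subset_Icc_self hz) hzne).le
      have h0 : (0:ℝ) ≤ v x0 0 := ge_of_tendsto hsl hev
      nlinarith [(hf x0 hx0I).2.one_le_sq]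
    have hw1 : 1 ≤ w y0 0 := by
      have hsl : Filter.Tendsto (slope (fun z => g z 0) y0) (𝓝[≠] y0) (𝓝 (w y0 0)) :=
        hasDerivAt_iff_tendsto_slope.1 hTg
      have hIoo' : ∀ᶠ z in 𝓝[≠] y0, z ∈ Set.Ioo a' b' :=
        Filter.Eventually.filter_mono nhdsWithin_le_nhds (Ioo_mem_nhds hy0.1 hy0.2)
      have hne' : ∀ᶠ z in 𝓝[≠] y0, z ≠ y0 := self_mem_nhdsWithin
      have hev : ∀ᶠ z in 𝓝[≠] y0, (0:ℝ) ≤ slope (fun z => g z 0) y0 z := by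
        filter_upwards [hIoo', hne'] with z hz hzne
        exact (slope_pos_of_strictMonoOn hgm hy0I (Set.Ioo_subset_Icc_self hz) hzne).le
      have h0 : (0:ℝ) ≤ w y0 0 := ge_of_tendsto hsl hev
      nlinarith [(hg y0 hy0I).2.one_le_sq]
    have hw0ne : w y0 0 ≠ 0 := by linarith
    set c := v x0 0 / w y0 0 with hcdef
    have hcpos : 0 < c := div_pos (by linarith) (by linarith)
    -- φ has derivative c at x0
    have hφder : HasDerivAt φ c x0 := by
      rw [hasDerivAt_iff_tendsto_slope]
      have htφ : Filter.Tendsto φ (𝓝[≠] x0) (𝓝[≠] y0) := by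
        rw [tendsto_nhdsWithin_iff]
        constructor
        · exact ((hφcont x0 hx0).tendsto).mono_left nhdsWithin_le_nhds
        · filter_upwards [hIoo, hne] with z hz hzne
          exact fun h => hzne ((hφmono.injOn (Set.Ioo_subset_Icc_self hz) hx0I) h)
      have hTgs : Filter.Tendsto (fun z => slope (fun u => g u 0) y0 (φ z)) (𝓝[≠] x0)
          (𝓝 (w y0 0)) := (hasDerivAt_iff_tendsto_slope.1 hTg).comp htφ
      have hTfs : Filter.Tendsto (slope (fun z => f z 0) x0) (𝓝[≠] x0) (𝓝 (v x0 0)) :=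
        hasDerivAt_iff_tendsto_slope.1 hTf
      have hdiv : Filter.Tendsto
          (fun z => slope (fun u => f u 0) x0 z / slope (fun u => g u 0) y0 (φ z))
          (𝓝[≠] x0) (𝓝 c) := hTfs.div hTgs hw0ne
      refine hdiv.congr' ?_
      filter_upwards [hIoo, hne] with z hz hzne
      have hzI : z ∈ Set.Icc a b := Set.Ioo_subset_Icc_self hz
      have hA : f z 0 - f x0 0 ≠ 0 := by
        refine sub_ne_zero.2 fun h => hzne ?_
        exact hfm.injOn hzI hx0I h
      have hB : z - x0 ≠ 0 := sub_ne_zero.2 hzne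
      have hC : φ z - y0 ≠ 0 := by
        refine sub_ne_zero.2 fun h => hzne ?_
        exact hφmono.injOn hzI hx0I h
      rw [slope_def_field, slope_def_field, slope_def_field, hφT z hzI, hφT x0 hx0I]
      field_simp
      ring
    -- chain rule : v x0 = c • w y0
    have hgd : HasDerivAt g (w y0) y0 :=
      (hg y0 hy0I).1.hasDerivAt (Icc_mem_nhds hy0.1 hy0.2)
    have hcomp : HasDerivAt (fun z => g (φ z)) (c • w y0) x0 := hgd.scomp x0 hφder
    have hfd : HasDerivAt f (v x0) x0 :=
      (hf x0 hx0I).1.hasDerivAt (Icc_mem_nhds hx0.1 hx0.2)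
    have heqf : f =ᶠ[𝓝 x0] fun z => g (φ z) := by
      filter_upwards [Icc_mem_nhds hx0.1 hx0.2] with z hz
      exact (hφval z hz).symm
    have hveq : v x0 = c • w y0 := hfd.unique (hcomp.congr_of_eventuallyEq heqf)
    -- Minkowski norms give c = 1
    have hmv := (hf x0 hx0I).2
    have hmw := (hg y0 hy0I).2
    unfold MinkUnit at hmv hmw
    rw [hveq] at hmv
    simp only [Pi.smul_apply, smul_eq_mul] at hmv
    have hsum : ∑ i ∈ Finset.univ.erase (0 : Fin (d + 2)), (c * w y0 i) ^ 2
        = c ^ 2 * ∑ i ∈ Finset.univ.erase (0 : Fin (d + 2)), (w y0 i) ^ 2 := by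
      rw [Finset.mul_sum]
      exact Finset.sum_congr rfl fun i _ => by ring
    rw [hsum] at hmv
    have hc1 : c = 1 := by nlinarith [hmv, hmw, hcpos]
    rw [← hc1]
    exact hφder
  -- MVT : φ increases with slope exactly 1 on the interior
  have hdiff : ∀ c e : ℝ, a < c → c < e → e < b → φ e - φ c = e - c := by
    intro c e h1 h2 h3
    obtain ⟨ξ, hξ, hslope⟩ := exists_hasDerivAt_eq_slope φ (fun _ => 1) h2
      (fun z hz => (hkey z ⟨h1.trans_le hz.1, hz.2.trans_lt h3⟩).continuousAt.continuousWithinAt)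
      (fun z hz => hkey z ⟨h1.trans hz.1, hz.2.trans h3⟩)
    have he : e - c ≠ 0 := sub_ne_zero.2 h2.ne'
    field_simp at hslope
    linarith
  -- conclude
  have hle1 : b - a ≤ b' - a' := by
    refine le_of_forall_pos_le_add ?_
    intro ε hε
    set δ := min (ε / 2) ((b - a) / 3) with hδ
    have hδpos : 0 < δ := lt_min (by linarith) (by linarith)
    have hδ3 : δ ≤ (b - a) / 3 := min_le_right _ _
    have hδε : δ ≤ ε / 2 := min_le_left _ _
    have h1 : a < a + δ := by linarith
    have h2 : a + δ < b - δ := by linarith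
    have h3 : b - δ < b := by linarith
    have heq := hdiff (a + δ) (b - δ) h1 h2 h3
    have hm1 : a' ≤ φ (a + δ) := (hφmem _ ⟨by linarith, by linarith⟩).1
    have hm2 : φ (b - δ) ≤ b' := (hφmem _ ⟨by linarith, by linarith⟩).2
    linarith
  have hle2 : b' - a' ≤ b - a := by
    refine le_of_forall_pos_le_add ?_
    intro ε hε
    set δ := min (ε / 2) ((b' - a') / 3) with hδ
    have hδpos : 0 < δ := lt_min (by linarith) (by linarith)
    have hδ3 : δ ≤ (b' - a') / 3 := min_le_right _ _
    have hδε : δ ≤ ε / 2 := min_le_left _ _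
    obtain ⟨x1, hx1, hφx1⟩ := hsurj (⟨by linarith, by linarith⟩ : a' + δ ∈ Set.Ioo a' b')
    obtain ⟨x2, hx2, hφx2⟩ := hsurj (⟨by linarith, by linarith⟩ : b' - δ ∈ Set.Ioo a' b')
    have hx12 : x1 < x2 := by
      by_contra hcon
      push_neg at hcon
      have := hφmono.monotoneOn (Set.Ioo_subset_Icc_self hx2) (Set.Ioo_subset_Icc_self hx1) hcon
      rw [hφx1, hφx2] at this
      linarith
    have heq := hdiff x1 x2 hx1.1 hx12 hx2.2
    rw [hφx1, hφx2] at heq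
    have : x2 - x1 ≤ b - a := by
      have := hx1.1
      have := hx2.2
      linarith
    linarith
  linarith


theorem equal_images_equal_param_lengths {d : ℕ} {a b a' b' : ℝ}
    (hab : a ≤ b) (hab' : a' ≤ b')
    (f v g w : ℝ → Fin (d + 2) → ℝ)
    (hf : WellParam a b f v) (hg : WellParam a' b' g w)
    (himg : f '' Set.Icc a b = g '' Set.Icc a' b') :
    b - a = b' - a' := by
  rcases eq_or_lt_of_le hab with heq | hlt
  · subst heq
    rcases eq_or_lt_of_le hab' with heq' | hlt'
    · rw [heq']; ring
    · exfalso
      have h1 : g a' ∈ f '' Set.Icc a a := by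
        rw [himg]; exact Set.mem_image_of_mem g (Set.left_mem_Icc.2 hab')
      have h2 : g b' ∈ f '' Set.Icc a a := by
        rw [himg]; exact Set.mem_image_of_mem g (Set.right_mem_Icc.2 hab')
      rw [Set.Icc_self, Set.image_singleton, Set.mem_singleton_iff] at h1 h2
      have : g a' 0 = g b' 0 := by rw [h1, h2]
      exact hlt'.ne (hg.time_injOn (Set.left_mem_Icc.2 hab') (Set.right_mem_Icc.2 hab') this)
  · rcases eq_or_lt_of_le hab' with heq' | hlt'
    · exfalso
      subst heq'
      have h1 : f a ∈ g '' Set.Icc a' a' := by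
        rw [← himg]; exact Set.mem_image_of_mem f (Set.left_mem_Icc.2 hab)
      have h2 : f b ∈ g '' Set.Icc a' a' := by
        rw [← himg]; exact Set.mem_image_of_mem f (Set.right_mem_Icc.2 hab)
      rw [Set.Icc_self, Set.image_singleton, Set.mem_singleton_iff] at h1 h2
      have : f a 0 = f b 0 := by rw [h1, h2]
      exact hlt.ne (hf.time_injOn (Set.left_mem_Icc.2 hab) (Set.right_mem_Icc.2 hab) this)
    · obtain ⟨F, V, hF, hFimg, hFmono⟩ := exists_good hab hf
      obtain ⟨G, W, hG, hGimg, hGmono⟩ := exists_good hab' hg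
      exact key hlt hlt' hF hG hFmono hGmono (by rw [hFimg, hGimg, himg])
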